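/- arXiv:2306.08579 — 5 statements merged into one kernel-verified Lean document; each statement's English description precedes it below -/
import Mathlib

section
/- Let K be a field of characteristic 2 and a₀, a₂, a₄ ∈ K with a₄ ∉ K². Then the polynomial Y⁴ + a₄ X⁴ + a₂ X² Z² + X Z³ + a₀ Z⁴ ∈ K[X,Y,Z] is irreducible over the algebraic closure of K (i.e. the plane projective quartic it defines is geometrically integral). -/
open MvPolynomial

section Aux
open Polynomial IntermediateField

theorem aux_X_pow_four_sub_C_irreducible {K : Type*} [Field K] [CharP K 2] {a : K}
    (ha : ∀ b : K, b ^ 2 ≠ a) :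
    Irreducible ((X : K[X]) ^ 4 - Polynomial.C a) := by
  have h4 : (4 : ℕ) = 2 * 2 := rfl
  rw [h4]
  apply X_pow_mul_sub_C_irreducible (X_pow_sub_C_irreducible_of_prime Nat.prime_two ha)
  intro E _ _ x hx
  have hint : IsIntegral K x := not_not.mp fun hni ↦ by
    simpa only [Polynomial.degree_zero, Polynomial.degree_X_pow_sub_C (by norm_num : 0 < 2),
      WithBot.natCast_ne_bot] using congr_arg Polynomial.degree (hx.symm.trans (dif_neg hni))
  apply X_pow_sub_C_irreducible_of_prime Nat.prime_two
  intro b hb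
  apply ha (Algebra.norm K b)
  rw [← map_pow, hb, ← IntermediateField.adjoin.powerBasis_gen hint,
    Algebra.PowerBasis.norm_gen_eq_coeff_zero_minpoly]
  simp [IntermediateField.minpoly_gen, hx]
  exact CharTwo.neg_eq a

end Aux

-- the bivariate polynomial f is not a square in the fraction field
theorem aux_not_sq {L : Type*} [Field L] [CharP L 2] (c d : L) :
    ∀ t : FractionRing (MvPolynomial (Fin 2) L),
      t ^ 2 ≠ algebraMap (MvPolynomial (Fin 2) L) _
        (C c * X 0 ^ 2 * X 1 ^ 2 + X 0 * X 1 ^ 3 + C d * X 1 ^ 4) := by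
  set A := MvPolynomial (Fin 2) L
  set f : A := C c * X 0 ^ 2 * X 1 ^ 2 + X 0 * X 1 ^ 3 + C d * X 1 ^ 4 with hf
  intro t ht
  obtain ⟨⟨p, q⟩, rfl⟩ := IsLocalization.mk'_surjective (nonZeroDivisors A) t
  have hq : (q : A) ≠ 0 := nonZeroDivisors.coe_ne_zero q
  have h1 : (algebraMap A (FractionRing A)) (p ^ 2) = (algebraMap A (FractionRing A)) (f * q ^ 2) := by
    rw [map_pow, ← IsLocalization.mk'_spec (FractionRing A) p q, mul_pow, ht, map_mul, map_pow]
  have key : p ^ 2 = f * q ^ 2 := IsFractionRing.injective A (FractionRing A) h1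
  have sqd : ∀ r : A, pderiv (0 : Fin 2) (r ^ 2) = 0 := fun r => by
    rw [sq, pderiv_mul, mul_comm (pderiv _ r) r, CharTwo.add_self_eq_zero]
  have hd := congrArg (pderiv (0 : Fin 2)) key
  rw [sqd, pderiv_mul, sqd, mul_zero, add_zero, hf] at hd
  have hdf : pderiv (0 : Fin 2) f = X 1 ^ 3 := by
    simp [hf, CharTwo.two_eq_zero]
  rw [hdf] at hd
  exact pow_ne_zero 3 (X_ne_zero (1 : Fin 2)) (by
    rcases mul_eq_zero.mp hd.symm with h | h
    · exact h
    · exact absurd h (pow_ne_zero 2 hq))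

set_option synthInstance.maxHeartbeats 1000000 in
set_option maxHeartbeats 1000000 in
theorem main_aux {L : Type*} [Field L] [CharP L 2] (b c d γ : L) (hγ : γ ^ 4 = b) :
    Irreducible
      ((X 1) ^ 4 + C b * (X 0) ^ 4 + C c * (X 0) ^ 2 * (X 2) ^ 2
        + X 0 * (X 2) ^ 3 + C d * (X 2) ^ 4 : MvPolynomial (Fin 3) L) := by
  set F : MvPolynomial (Fin 3) L :=
    (X 1) ^ 4 + C b * (X 0) ^ 4 + C c * (X 0) ^ 2 * (X 2) ^ 2
      + X 0 * (X 2) ^ 3 + C d * (X 2) ^ 4 with hFdef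
  set φ : MvPolynomial (Fin 3) L →ₐ[L] MvPolynomial (Fin 3) L :=
    aeval ![X 0, X 1 + C γ * X 0, X 2] with hφdef
  have hφφ : φ.comp φ = AlgHom.id L _ := by
    apply MvPolynomial.algHom_ext
    intro i
    fin_cases i <;>
      simp [hφdef, add_assoc, CharTwo.add_self_eq_zero]
  set e₁ : MvPolynomial (Fin 3) L ≃ₐ[L] MvPolynomial (Fin 3) L :=
    AlgEquiv.ofAlgHom φ φ hφφ hφφ with he₁
  have hpow4 : ∀ u v : MvPolynomial (Fin 3) L, (u + v) ^ 4 = u ^ 4 + v ^ 4 := by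
    intro u v
    rw [show (4 : ℕ) = 2 * 2 from rfl, pow_mul, CharTwo.add_sq, CharTwo.add_sq,
      ← pow_mul, ← pow_mul]
  have key1 : e₁ F = (X 1) ^ 4 + C c * (X 0) ^ 2 * (X 2) ^ 2
      + X 0 * (X 2) ^ 3 + C d * (X 2) ^ 4 := by
    show φ F = _
    rw [hFdef]
    simp only [map_add, map_mul, map_pow, hφdef, aeval_X, aeval_C]
    simp only [Matrix.cons_val_zero, Matrix.cons_val_one, Matrix.head_cons, Matrix.cons_val_two,
      Matrix.tail_cons]
    rw [hpow4 (X 1) (C γ * X 0), mul_pow, ← map_pow, hγ]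
    have : algebraMap L (MvPolynomial (Fin 3) L) = C := rfl
    rw [this]
    ring_nf
    simp [CharTwo.two_eq_zero]
  set e₂ := renameEquiv L (Equiv.swap (0 : Fin 3) 1) with he₂
  have key2 : e₂ (e₁ F) = (X 0) ^ 4 + C c * (X 1) ^ 2 * (X 2) ^ 2
      + X 1 * (X 2) ^ 3 + C d * (X 2) ^ 4 := by
    rw [key1]
    simp only [he₂, renameEquiv_apply, map_add, map_mul, map_pow, rename_X, rename_C]
    simp [Equiv.swap_apply_def]
  set A := MvPolynomial (Fin 2) L with hA
  set f : A := C c * X 0 ^ 2 * X 1 ^ 2 + X 0 * X 1 ^ 3 + C d * X 1 ^ 4 with hfdef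
  set e₃ := finSuccEquiv L 2 with he₃
  have hX1 : e₃ (X 1) = Polynomial.C (X 0) := by
    rw [show (1 : Fin 3) = Fin.succ 0 from rfl, he₃, finSuccEquiv_X_succ]
  have hX2 : e₃ (X 2) = Polynomial.C (X 1) := by
    rw [show (2 : Fin 3) = Fin.succ 1 from rfl, he₃, finSuccEquiv_X_succ]
  have hC : ∀ r : L, e₃ (C r) = Polynomial.C (MvPolynomial.C r) := by
    intro r
    rw [← MvPolynomial.algebraMap_eq, AlgEquiv.commutes]
    rfl
  have key3 : e₃ (e₂ (e₁ F)) = Polynomial.X ^ 4 + Polynomial.C f := by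
    rw [key2]
    simp only [map_add, map_mul, map_pow, hX1, hX2, hC]
    simp only [he₃, finSuccEquiv_X_zero]
    rw [hfdef]
    simp only [map_add, map_mul, map_pow]
    ring
  have hirr : Irreducible (Polynomial.X ^ 4 + Polynomial.C f : Polynomial A) := by
    have h2 : (Polynomial.X ^ 4 + Polynomial.C f : Polynomial A)
        = Polynomial.X ^ 4 - Polynomial.C f := (CharTwo.sub_eq_add _ _).symm
    rw [h2]
    have hmon : (Polynomial.X ^ 4 - Polynomial.C f : Polynomial A).Monic :=
      Polynomial.monic_X_pow_sub_C f (by norm_num)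
    haveI : IsIntegrallyClosed A := inferInstance
    rw [hmon.irreducible_iff_irreducible_map_fraction_map (K := FractionRing A)]
    rw [Polynomial.map_sub, Polynomial.map_pow, Polynomial.map_X, Polynomial.map_C]
    haveI : CharP (FractionRing A) 2 :=
      charP_of_injective_algebraMap (IsFractionRing.injective A (FractionRing A)) 2
    exact aux_X_pow_four_sub_C_irreducible (aux_not_sq c d)
  have h2 := (MulEquiv.irreducible_iff (f := e₃)).mp (key3 ▸ hirr)
  have h1 := (MulEquiv.irreducible_iff (f := e₂)).mp h2
  exact (MulEquiv.irreducible_iff (f := e₁)).mp h1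

/-- For a field `K` of characteristic 2 and `a₀, a₂, a₄ ∈ K` with `a₄ ∉ K²`,
the polynomial `Y⁴ + a₄ X⁴ + a₂ X² Z² + X Z³ + a₀ Z⁴` is irreducible over the algebraic
closure of `K` (variables: `X 0 = X`, `X 1 = Y`, `X 2 = Z`). -/
theorem stmt_1 {K : Type*} [Field K] [CharP K 2] (a₀ a₂ a₄ : K)
    (h : ∀ t : K, t ^ 2 ≠ a₄) :
    Irreducible
      ((X 1) ^ 4 + C (algebraMap K (AlgebraicClosure K) a₄) * (X 0) ^ 4
        + C (algebraMap K (AlgebraicClosure K) a₂) * (X 0) ^ 2 * (X 2) ^ 2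
        + X 0 * (X 2) ^ 3
        + C (algebraMap K (AlgebraicClosure K) a₀) * (X 2) ^ 4
        : MvPolynomial (Fin 3) (AlgebraicClosure K)) := by
  obtain ⟨γ, hγ⟩ := IsAlgClosed.exists_pow_nat_eq
    (algebraMap K (AlgebraicClosure K) a₄) (n := 4) (by norm_num)
  exact main_aux _ _ _ γ hγ
end

section
/- Let K be a field of characteristic 2 and a₀, a₂, a₄ ∈ K with a₄ ∉ K². Consider the projective plane quartic C : Y⁴ + a₄ X⁴ + a₂ X² Z² + X Z³ + a₀ Z⁴ = 0 over K. Then the unique point of C(K̄) at which both partial derivatives ∂/∂X, ∂/∂Y, ∂/∂Z of the defining polynomial all vanish is the point (1 : a₄^{1/4} : 0), where a₄^{1/4} is the unique fourth root of a₄ in the algebraic closure K̄. -/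
open MvPolynomial

/-- The quartic `Y⁴ + a₄ X⁴ + a₂ X² Z² + X Z³ + a₀ Z⁴` (variables `X 0 = X, X 1 = Y, X 2 = Z`). -/
noncomputable def quarticI {R : Type*} [CommRing R] (a₀ a₂ a₄ : R) : MvPolynomial (Fin 3) R :=
  (X 1) ^ 4 + C a₄ * (X 0) ^ 4 + C a₂ * (X 0) ^ 2 * (X 2) ^ 2 + X 0 * (X 2) ^ 3 + C a₀ * (X 2) ^ 4

/-- For `K` of characteristic 2 and `a₄ ∉ K²`, the unique point of the
projective quartic `C : Y⁴ + a₄X⁴ + a₂X²Z² + XZ³ + a₀Z⁴ = 0` over the algebraic closure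
at which all three partial derivatives of the defining polynomial vanish is `(1 : a₄^{1/4} : 0)`,
where `t` is the (unique) fourth root of `a₄` in the algebraic closure. -/
theorem stmt_2 {K : Type*} [Field K] [CharP K 2] (a₀ a₂ a₄ : K)
    (h : ∀ s : K, s ^ 2 ≠ a₄)
    (t : AlgebraicClosure K) (ht : t ^ 4 = algebraMap K (AlgebraicClosure K) a₄) :
    ∀ x y z : AlgebraicClosure K, ¬ (x = 0 ∧ y = 0 ∧ z = 0) →
      ((eval ![x, y, z] (quarticI (algebraMap K (AlgebraicClosure K) a₀)
            (algebraMap K (AlgebraicClosure K) a₂) (algebraMap K (AlgebraicClosure K) a₄)) = 0 ∧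
        ∀ i : Fin 3, eval ![x, y, z] (pderiv i (quarticI (algebraMap K (AlgebraicClosure K) a₀)
            (algebraMap K (AlgebraicClosure K) a₂) (algebraMap K (AlgebraicClosure K) a₄))) = 0)
        ↔ ∃ c : AlgebraicClosure K, c ≠ 0 ∧ x = c ∧ y = c * t ∧ z = 0) := by
  haveI : CharP (AlgebraicClosure K) 2 :=
    charP_of_injective_algebraMap (algebraMap K (AlgebraicClosure K)).injective 2
  have two0 : (2 : AlgebraicClosure K) = 0 := by
    exact_mod_cast CharP.cast_eq_zero (AlgebraicClosure K) 2
  set A₀ := algebraMap K (AlgebraicClosure K) a₀ with hA₀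
  set A₂ := algebraMap K (AlgebraicClosure K) a₂ with hA₂
  set A₄ := algebraMap K (AlgebraicClosure K) a₄ with hA₄
  intro x y z hxyz
  constructor
  · rintro ⟨hF, hD⟩
    have h0 := hD 0
    simp [quarticI, pderiv_mul, pderiv_pow, pderiv_X, ← hA₀, ← hA₂, ← hA₄] at h0 hF
    have hz3 : z ^ 3 = 0 := by
      linear_combination h0 - (2 * A₄ * x ^ 3 + z ^ 2 * A₂ * x) * two0
    have hz : z = 0 := by
      have := pow_eq_zero_iff (n := 3) (by norm_num) |>.mp hz3
      exact this
    subst hz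
    have key : (y + t * x) ^ 4 = 0 := by
      linear_combination hF + x ^ 4 * ht +
        (2 * y ^ 3 * t * x + 3 * y ^ 2 * t ^ 2 * x ^ 2 + 2 * y * t ^ 3 * x ^ 3) * two0
    have hy : y + t * x = 0 := pow_eq_zero_iff (n := 4) (by norm_num) |>.mp key
    have hx : x ≠ 0 := by
      rintro rfl
      apply hxyz
      refine ⟨rfl, ?_, rfl⟩
      linear_combination hy
    exact ⟨x, hx, rfl, by linear_combination hy - x * t * two0, rfl⟩
  · rintro ⟨c, hc, rfl, rfl, rfl⟩
    refine ⟨?_, ?_⟩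
    · simp only [quarticI, ← hA₀, ← hA₂, ← hA₄, map_add, map_mul, map_pow, eval_X, eval_C]
      norm_num
      simp
      linear_combination x ^ 4 * ht + A₄ * x ^ 4 * two0
    · intro i
      fin_cases i <;>
        simp [quarticI, pderiv_mul, pderiv_pow, pderiv_X, ← hA₀, ← hA₂, ← hA₄,
          -mul_eq_zero, -pow_eq_zero_iff] <;>
        first
          | linear_combination (2 * A₄ * x ^ 3) * two0
          | linear_combination (2 * (x * t) ^ 3) * two0
end

section
/- Let K be a field of characteristic 2 and let a₀ ∈ K, a₂ ∈ K \ K². The polynomial Z⁴ + a₂ X² + X + a₀ ∈ K[X, Z] is irreducible, and the function field F = K(x,z) with z⁴ = a₀ + x + a₂x² satisfies: K(x, z²) is the unique intermediate field F₁ with F|F₁ purely inseparable of degree 2, and K(x) is the unique intermediate field F₂ with F|F₂ purely inseparable of degree 4. -/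
open IntermediateField

open Polynomial

section Helpers

variable {L M : Type*} [Field L] [Field M] [Algebra L M] [CharP L 2]

theorem aux_minpoly_pow (c : M) (n : ℕ) (a : L) (hc : c ^ 2 ^ n = algebraMap L M a) :
    ∃ k, 1 ≤ k ∧ k ≤ 2 ^ n ∧ (minpoly L c).natDegree = k ∧
      algebraMap L M ((minpoly L c).coeff 0) = c ^ k ∧
      (k = 2 ^ n → minpoly L c = X ^ 2 ^ n - C a) := by
  haveI : CharP M 2 := charP_of_injective_algebraMap (algebraMap L M).injective 2
  haveI : CharP M[X] 2 := charP_of_injective_ringHom (C_injective (R := M)) 2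
  haveI : Fact (Nat.Prime 2) := ⟨Nat.prime_two⟩
  have hm : (X ^ 2 ^ n - C a : L[X]).Monic := monic_X_pow_sub_C a (by positivity)
  have hev : (Polynomial.aeval c) (X ^ 2 ^ n - C a : L[X]) = 0 := by
    simp [hc]
  have hint : IsIntegral L c := ⟨_, hm, hev⟩
  have hdvd : minpoly L c ∣ X ^ 2 ^ n - C a := minpoly.dvd L c hev
  have hmapq : (X ^ 2 ^ n - C a : L[X]).map (algebraMap L M) = (X - C c) ^ 2 ^ n := by
    rw [Polynomial.map_sub, Polynomial.map_pow, map_X, map_C, sub_pow_char_pow, ← C_pow, ← hc]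
  have hmapdvd : (minpoly L c).map (algebraMap L M) ∣ (X - C c) ^ 2 ^ n := by
    rw [← hmapq]
    exact Polynomial.map_dvd _ hdvd
  obtain ⟨i, hi, hassoc⟩ := (dvd_prime_pow (prime_X_sub_C c) _).mp hmapdvd
  have heq : (minpoly L c).map (algebraMap L M) = (X - C c) ^ i :=
    eq_of_monic_of_associated ((minpoly.monic hint).map _) ((monic_X_sub_C c).pow i) hassoc
  have hnd : (minpoly L c).natDegree = i := by
    have h := congrArg natDegree heq
    rwa [(minpoly.monic hint).natDegree_map, natDegree_pow, natDegree_X_sub_C, mul_one] at h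
  refine ⟨i, ?_, hi, hnd, ?_, ?_⟩
  · rw [← hnd]; exact minpoly.natDegree_pos hint
  · have h := congrArg (fun p => Polynomial.coeff p 0) heq
    simp only [coeff_map] at h
    rw [h, coeff_zero_eq_eval_zero, eval_pow, eval_sub, eval_X, eval_C, zero_sub,
      CharTwo.neg_eq]
  · intro hik
    apply Polynomial.map_injective (algebraMap L M) (algebraMap L M).injective
    rw [heq, hik, hmapq]

theorem minpoly_quartic (c : M) (a : L) (hc : c ^ 4 = algebraMap L M a)
    (ha : ∀ b : L, b ^ 2 ≠ a) : minpoly L c = X ^ 4 - C a := by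
  have hinj := (algebraMap L M).injective
  have hc' : c ^ 2 ^ 2 = algebraMap L M a := by rw [show (2:ℕ)^2 = 4 from rfl]; exact hc
  obtain ⟨k, h1, h4, hnd, hc0, hfin⟩ := aux_minpoly_pow c 2 a hc'
  have hcne : c ≠ 0 := by
    intro h
    apply ha 0
    have : algebraMap L M a = 0 := by rw [← hc, h]; ring
    have ha0 : a = 0 := by
      apply hinj; rw [this, map_zero]
    rw [ha0]; ring
  have hnotr : ∀ l : L, algebraMap L M l ≠ c := by
    intro l hl
    apply ha (l ^ 2)
    apply hinj
    rw [map_pow, map_pow, hl, ← hc]; ring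
  rw [show (2:ℕ)^2 = 4 from rfl] at h4 hfin
  interval_cases k
  · exact absurd (by rw [hc0]; ring) (hnotr ((minpoly L c).coeff 0)).elim
  · exfalso
    apply ha ((minpoly L c).coeff 0)
    apply hinj
    rw [map_pow, hc0, ← hc]; ring
  · exfalso
    apply hnotr (a * ((minpoly L c).coeff 0)⁻¹)
    rw [map_mul, map_inv₀, hc0, ← hc]
    field_simp
  · exact hfin rfl

theorem minpoly_quadratic (c : M) (a : L) (hc : c ^ 2 = algebraMap L M a)
    (ha : ∀ b : L, b ^ 2 ≠ a) : minpoly L c = X ^ 2 - C a := by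
  have hinj := (algebraMap L M).injective
  have hc' : c ^ 2 ^ 1 = algebraMap L M a := by rw [pow_one]; exact hc
  obtain ⟨k, h1, h2, hnd, hc0, hfin⟩ := aux_minpoly_pow c 1 a hc'
  rw [pow_one] at h2 hfin
  interval_cases k
  · exfalso
    apply ha ((minpoly L c).coeff 0)
    apply hinj
    rw [map_pow, hc0, ← hc]; ring
  · exact hfin rfl

theorem not_square_aux {K : Type*} [Field K] [CharP K 2] (a₀ a₂ : K) (r s : K[X]) (hs : s ≠ 0) :
    r ^ 2 ≠ (C a₀ + X + C a₂ * X ^ 2) * s ^ 2 := by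
  intro h
  have h2 : (C (2:K) : K[X]) = 0 := by
    rw [show (2:K) = 0 from CharTwo.two_eq_zero, map_zero]
  have hd := congrArg derivative h
  rw [derivative_pow, derivative_mul, derivative_pow] at hd
  simp only [derivative_add, derivative_C, derivative_X, derivative_mul, derivative_X_pow,
    h2, Nat.cast_ofNat, zero_mul, mul_zero, zero_add, add_zero] at hd
  -- goal shape: 0 = hopefully s ^ 2 = 0 or similar
  rw [one_mul] at hd
  exact hs ((pow_eq_zero_iff two_ne_zero).mp hd.symm)

end Helpers

set_option maxHeartbeats 1000000 in
/-- Let `K` be of characteristic 2, `a₀ ∈ K`, `a₂ ∈ K \ K²`. Then the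
polynomial `Z⁴ + a₂X² + X + a₀` (variables `X 0 = X`, `X 1 = Z`) is irreducible, and the
function field `F = K(x, z)` with `z⁴ = a₀ + x + a₂x²` satisfies: `K(x, z²)` is the unique
intermediate field `F₁` with `F|F₁` purely inseparable of degree 2, and `K(x)` is the unique
intermediate field `F₂` with `F|F₂` purely inseparable of degree 4. -/
theorem stmt_8 {K F : Type*} [Field K] [Field F] [CharP K 2] [Algebra K F]
    (a₀ a₂ : K) (h2 : ∀ t : K, t ^ 2 ≠ a₂)
    (x z : F) (hx : Transcendental K x)
    (hz : z ^ 4 = algebraMap K F a₀ + x + algebraMap K F a₂ * x ^ 2)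
    (hgen : adjoin K {x, z} = ⊤) :
    Irreducible ((MvPolynomial.X 1) ^ 4 + MvPolynomial.C a₂ * (MvPolynomial.X 0) ^ 2
        + MvPolynomial.X 0 + MvPolynomial.C a₀ : MvPolynomial (Fin 2) K) ∧
    (∀ E : IntermediateField K F,
      (IsPurelyInseparable E F ∧ Module.finrank E F = 2) ↔ E = adjoin K {x, z ^ 2}) ∧
    (∀ E : IntermediateField K F,
      (IsPurelyInseparable E F ∧ Module.finrank E F = 4) ↔ E = adjoin K {x}) := by
  haveI hF2 : CharP F 2 := charP_of_injective_algebraMap (algebraMap K F).injective 2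
  haveI : Fact (Nat.Prime 2) := ⟨Nat.prime_two⟩
  set g : K[X] := Polynomial.C a₀ + Polynomial.X + Polynomial.C a₂ * Polynomial.X ^ 2 with hg
  have hgx : Polynomial.aeval x g = algebraMap K F a₀ + x + algebraMap K F a₂ * x ^ 2 := by
    simp [hg]
  set L : IntermediateField K F := adjoin K {x} with hL
  haveI : CharP L 2 := charP_of_injective_algebraMap (algebraMap K L).injective 2
  haveI : ExpChar L 2 := ExpChar.prime Nat.prime_two
  have hxL : x ∈ L := subset_adjoin K {x} rfl
  set xL : L := ⟨x, hxL⟩ with hxLdef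
  have haev : ∀ p : K[X], algebraMap L F (Polynomial.aeval xL p) = Polynomial.aeval x p := by
    intro p
    exact (Polynomial.aeval_algHom_apply L.val xL p).symm
  set c : L := Polynomial.aeval xL g with hc
  have hcF : algebraMap L F c = Polynomial.aeval x g := haev g
  have hgne : Polynomial.aeval x g ≠ 0 := by
    intro h
    have hg0 : g = 0 := transcendental_iff.mp hx g h
    have h1 := congrArg (fun p => Polynomial.coeff p 1) hg0
    simp [hg] at h1
  have ha : ∀ b : L, b ^ 2 ≠ c := by
    intro b hb
    obtain ⟨r, s, hrs⟩ := (mem_adjoin_simple_iff K (b : F)).mp b.2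
    have hbF : (b : F) ^ 2 = Polynomial.aeval x g := by
      have h := congrArg (algebraMap L F) hb
      rw [map_pow, hcF] at h
      exact h
    by_cases hs : Polynomial.aeval x s = 0
    · rw [hs, div_zero] at hrs
      rw [hrs] at hbF
      exact hgne (by rw [← hbF]; ring)
    · have hb2 : (b : F) * Polynomial.aeval x s = Polynomial.aeval x r := by
        rw [hrs, div_mul_cancel₀ _ hs]
      have key : Polynomial.aeval x (r ^ 2 - g * s ^ 2) = (0 : F) := by
        rw [map_sub, map_pow, map_mul, map_pow, ← hb2, mul_pow, hbF]
        ring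
      have hkey : r ^ 2 - g * s ^ 2 = 0 := transcendental_iff.mp hx _ key
      have hsne : s ≠ 0 := fun h0 => hs (by rw [h0, map_zero])
      rw [sub_eq_zero, hg] at hkey
      exact not_square_aux a₀ a₂ r s hsne hkey
  have hzc : z ^ 4 = algebraMap L F c := by rw [hcF, hgx, hz]
  have minz : minpoly L z = Polynomial.X ^ 4 - Polynomial.C c := minpoly_quartic z c hzc ha
  have hzint : IsIntegral L z :=
    ⟨_, monic_X_pow_sub_C c (by norm_num : (4:ℕ) ≠ 0), by simp [hzc]⟩
  have htopL : adjoin L {z} = ⊤ := by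
    apply restrictScalars_injective K
    rw [restrictScalars_top, adjoin_adjoin_left, Set.singleton_union, ← hgen]
  have hfr4 : Module.finrank L F = 4 := by
    rw [← IntermediateField.finrank_top' (F := L) (E := F), ← htopL,
      adjoin.finrank hzint, minz, natDegree_X_pow_sub_C]
  haveI hPIL : IsPurelyInseparable L F := by
    have h1 : IsPurelyInseparable L ↥(adjoin L {z}) :=
      (isPurelyInseparable_adjoin_simple_iff_pow_mem L F 2).mpr
        ⟨2, c, by rw [show (2:ℕ)^2 = 4 from rfl, ← hzc]⟩
    rw [htopL] at h1
    exact AlgEquiv.isPurelyInseparable (topEquiv : (⊤ : IntermediateField L F) ≃ₐ[L] F)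
  set M : IntermediateField K F := adjoin K {x, z ^ 2} with hM
  set M' : IntermediateField L F := adjoin L {z ^ 2} with hM'
  have hMM' : restrictScalars K M' = M := by
    rw [hM', adjoin_adjoin_left, Set.singleton_union, hM]
  have hz2c : (z ^ 2) ^ 2 = algebraMap L F c := by rw [← pow_mul]; exact hzc
  have minz2 : minpoly L (z ^ 2) = Polynomial.X ^ 2 - Polynomial.C c :=
    minpoly_quadratic (z ^ 2) c hz2c ha
  have hz2int : IsIntegral L (z ^ 2) :=
    ⟨_, monic_X_pow_sub_C c (by norm_num : (2:ℕ) ≠ 0), by simp [hz2c]⟩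
  have hfrM' : Module.finrank L M' = 2 := by
    rw [hM', adjoin.finrank hz2int, minz2, natDegree_X_pow_sub_C]
  have hzM' : z ∉ M' := by
    intro hzm
    have hle : adjoin L {z} ≤ M' := adjoin_le_iff.mpr (by simpa using hzm)
    rw [htopL, top_le_iff] at hle
    rw [hle, IntermediateField.finrank_top' (F := L) (E := F), hfr4] at hfrM'
    omega
  have hzM : z ∉ M := by
    rw [← hMM', mem_restrictScalars]
    exact hzM'
  have hz2M : z ^ 2 ∈ M := subset_adjoin K _ (Set.mem_insert_of_mem _ rfl)
  have hxM : x ∈ M := subset_adjoin K _ (Set.mem_insert _ _)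
  haveI : CharP M 2 := charP_of_injective_algebraMap (algebraMap K M).injective 2
  haveI : ExpChar M 2 := ExpChar.prime Nat.prime_two
  set w : M := ⟨z ^ 2, hz2M⟩ with hw
  have hzw : z ^ 2 = algebraMap M F w := rfl
  have haM : ∀ b : M, b ^ 2 ≠ w := by
    intro b hb
    apply hzM
    have hbF : (b : F) ^ 2 = z ^ 2 := by
      have h := congrArg (algebraMap M F) hb
      rw [map_pow] at h
      exact h
    have hbz : (b : F) = z := by
      have h0 : ((b : F) - z) ^ 2 = 0 := by rw [sub_pow_char, hbF, sub_self]
      have h1 : (b : F) - z = 0 :=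
        (pow_eq_zero_iff (by norm_num : (2:ℕ) ≠ 0)).mp h0
      exact sub_eq_zero.mp h1
    rw [← hbz]
    exact b.2
  have minzM : minpoly M z = Polynomial.X ^ 2 - Polynomial.C w :=
    minpoly_quadratic z w hzw haM
  have hzintM : IsIntegral M z :=
    ⟨_, monic_X_pow_sub_C w (by norm_num : (2:ℕ) ≠ 0), by simp [hzw.symm]⟩
  have htopM : adjoin M {z} = ⊤ := by
    apply restrictScalars_injective K
    rw [restrictScalars_top]
    rw [← top_le_iff, ← hgen]
    apply adjoin_le_iff.mpr
    rintro y hy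
    rw [SetLike.mem_coe, mem_restrictScalars]
    rcases hy with hy | hy
    · rw [hy]
      exact (adjoin M {z}).algebraMap_mem ⟨x, hxM⟩
    · rw [Set.mem_singleton_iff] at hy
      rw [hy]
      exact subset_adjoin M {z} rfl
  have hfrM : Module.finrank M F = 2 := by
    rw [← IntermediateField.finrank_top' (F := M) (E := F), ← htopM,
      adjoin.finrank hzintM, minzM, natDegree_X_pow_sub_C]
  haveI hPIM : IsPurelyInseparable M F := by
    have h1 : IsPurelyInseparable M ↥(adjoin M {z}) :=
      (isPurelyInseparable_adjoin_simple_iff_pow_mem M F 2).mpr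
        ⟨1, w, by rw [pow_one, ← hzw]⟩
    rw [htopM] at h1
    exact AlgEquiv.isPurelyInseparable (topEquiv : (⊤ : IntermediateField M F) ≃ₐ[M] F)
  haveI : FiniteDimensional M F := Module.finite_of_finrank_pos (by rw [hfrM]; norm_num)
  haveI : FiniteDimensional L F := Module.finite_of_finrank_pos (by rw [hfr4]; norm_num)
  refine ⟨?_, ?_, ?_⟩
  · set ι₁ : MvPolynomial (Fin 1) K ≃ₐ[K] Polynomial K :=
      (MvPolynomial.finSuccEquiv K 0).trans
        (Polynomial.mapAlgEquiv (MvPolynomial.isEmptyAlgEquiv K (Fin 0))) with hι₁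
    set e : MvPolynomial (Fin 2) K ≃ₐ[K] Polynomial (Polynomial K) :=
      (MvPolynomial.renameEquiv K (Equiv.swap 0 1)).trans
        ((MvPolynomial.finSuccEquiv K 1).trans (Polynomial.mapAlgEquiv ι₁)) with he
    have he0 : e (MvPolynomial.X 0) = Polynomial.C Polynomial.X := by
      simp only [he, hι₁, AlgEquiv.trans_apply, MvPolynomial.renameEquiv_apply,
        MvPolynomial.rename_X, Equiv.swap_apply_left]
      rw [show (1 : Fin 2) = (0 : Fin 1).succ from rfl, MvPolynomial.finSuccEquiv_X_succ]
      simp [Polynomial.mapAlgEquiv, MvPolynomial.finSuccEquiv_X_zero]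
    have he1 : e (MvPolynomial.X 1) = Polynomial.X := by
      simp only [he, hι₁, AlgEquiv.trans_apply, MvPolynomial.renameEquiv_apply,
        MvPolynomial.rename_X, Equiv.swap_apply_right]
      rw [MvPolynomial.finSuccEquiv_X_zero]
      simp [Polynomial.mapAlgEquiv]
    have heC : ∀ a : K, e (MvPolynomial.C a) = Polynomial.C (Polynomial.C a) := by
      intro a
      have h1 : (MvPolynomial.C a : MvPolynomial (Fin 2) K) =
          algebraMap K (MvPolynomial (Fin 2) K) a := rfl
      rw [h1, AlgEquiv.commutes]
      rfl
    have heP : e ((MvPolynomial.X 1) ^ 4 + MvPolynomial.C a₂ * (MvPolynomial.X 0) ^ 2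
        + MvPolynomial.X 0 + MvPolynomial.C a₀) = Polynomial.X ^ 4 + Polynomial.C g := by
      rw [map_add, map_add, map_add, map_mul, map_pow, map_pow, he0, he1, heC, heC]
      rw [hg]
      simp only [map_add, map_mul, map_pow]
      ring
    have hφinj : Function.Injective ((Polynomial.aeval xL).toRingHom : K[X] →+* L) := by
      intro p q hpq
      have h1 : Polynomial.aeval x p = Polynomial.aeval x q := by
        rw [← haev, ← haev]
        exact congrArg (algebraMap L F) hpq
      have h2 : Polynomial.aeval x (p - q) = 0 := by rw [map_sub, h1, sub_self]
      exact sub_eq_zero.mp (transcendental_iff.mp hx _ h2)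
    have hQmonic : (Polynomial.X ^ 4 + Polynomial.C g : Polynomial K[X]).Monic :=
      Polynomial.monic_X_pow_add_C g (by norm_num)
    have hmap : (Polynomial.X ^ 4 + Polynomial.C g).map
        ((Polynomial.aeval xL).toRingHom : K[X] →+* L) =
        Polynomial.X ^ 4 + Polynomial.C c := by
      rw [Polynomial.map_add, Polynomial.map_pow, Polynomial.map_X, Polynomial.map_C]
      rfl
    have hirrL : Irreducible (Polynomial.X ^ 4 + Polynomial.C c : Polynomial L) := by
      have hi := minpoly.irreducible hzint
      rw [minz] at hi
      rwa [sub_eq_add_neg, ← Polynomial.C_neg, CharTwo.neg_eq] at hi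
    have hQirr : Irreducible (Polynomial.X ^ 4 + Polynomial.C g : Polynomial K[X]) :=
      hQmonic.isPrimitive.irreducible_of_irreducible_map_of_injective hφinj
        (by rw [hmap]; exact hirrL)
    exact (MulEquiv.irreducible_iff
      (e : MvPolynomial (Fin 2) K ≃ₐ[K] Polynomial (Polynomial K))).mp (heP ▸ hQirr)

  · intro E
    constructor
    · rintro ⟨hPI, hr⟩
      haveI := hPI
      haveI : FiniteDimensional E F := Module.finite_of_finrank_pos (by rw [hr]; norm_num)
      haveI : CharP E 2 := charP_of_injective_algebraMap (algebraMap K E).injective 2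
      haveI : ExpChar E 2 := ExpChar.prime Nat.prime_two
      have claim : ∀ y : F, y ^ 2 ∈ E := by
        intro y
        obtain ⟨n, d, hmin⟩ := IsPurelyInseparable.minpoly_eq_X_pow_sub_C E 2 y
        have hint : IsIntegral E y := IsIntegral.of_finite E y
        have hdeg : (minpoly E y).natDegree = 2 ^ n := by
          rw [hmin, natDegree_X_pow_sub_C]
        have hdvd : Module.finrank E E⟮y⟯ ∣ Module.finrank E F :=
          ⟨Module.finrank E⟮y⟯ F, (Module.finrank_mul_finrank E E⟮y⟯ F).symm⟩
        rw [adjoin.finrank hint, hdeg, hr] at hdvd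
        have hy : y ^ 2 ^ n = algebraMap E F d := by
          have h := minpoly.aeval E y
          rw [hmin, map_sub, map_pow, Polynomial.aeval_X, Polynomial.aeval_C, sub_eq_zero] at h
          exact h
        have hdE : algebraMap E F d ∈ E := d.2
        rcases (Nat.dvd_prime Nat.prime_two).mp hdvd with h | h
        · rw [h, pow_one] at hy
          rw [hy]
          exact pow_mem hdE 2
        · rw [h] at hy
          rw [hy]
          exact hdE
      have hxE : x ∈ E := by
        have h1 : z ^ 2 ∈ E := claim z
        have hq : x ^ 2 ∈ E := claim x
        have h4 : z ^ 4 ∈ E := by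
          have hm := E.mul_mem h1 h1
          rwa [show z ^ 2 * z ^ 2 = z ^ 4 by ring] at hm
        have hxe : x = z ^ 4 - algebraMap K F a₀ - algebraMap K F a₂ * x ^ 2 := by
          rw [hz]; ring
        rw [hxe]
        exact E.sub_mem (E.sub_mem h4 (E.algebraMap_mem a₀))
          (E.mul_mem (E.algebraMap_mem a₂) hq)
      have hMle : M ≤ E := by
        rw [hM]
        apply adjoin_le_iff.mpr
        rintro y hy
        rcases hy with hy | hy
        · rw [hy]; exact hxE
        · rw [Set.mem_singleton_iff] at hy
          rw [hy]; exact claim z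
      exact (eq_of_le_of_finrank_eq' hMle (by rw [hfrM, hr])).symm
    · rintro rfl
      exact ⟨hPIM, hfrM⟩
  · intro E
    constructor
    · rintro ⟨hPI, hr⟩
      haveI := hPI
      haveI : FiniteDimensional E F := Module.finite_of_finrank_pos (by rw [hr]; norm_num)
      haveI : CharP E 2 := charP_of_injective_algebraMap (algebraMap K E).injective 2
      haveI : ExpChar E 2 := ExpChar.prime Nat.prime_two
      have claim : ∀ y : F, y ^ 4 ∈ E := by
        intro y
        obtain ⟨n, d, hmin⟩ := IsPurelyInseparable.minpoly_eq_X_pow_sub_C E 2 y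
        have hint : IsIntegral E y := IsIntegral.of_finite E y
        have hdeg : (minpoly E y).natDegree = 2 ^ n := by
          rw [hmin, natDegree_X_pow_sub_C]
        have hdvd : Module.finrank E E⟮y⟯ ∣ Module.finrank E F :=
          ⟨Module.finrank E⟮y⟯ F, (Module.finrank_mul_finrank E E⟮y⟯ F).symm⟩
        rw [adjoin.finrank hint, hdeg, hr, show (4:ℕ) = 2 ^ 2 from rfl] at hdvd
        have hn : n ≤ 2 := (Nat.pow_dvd_pow_iff_le_right (by norm_num)).mp hdvd
        have hy : y ^ 2 ^ n = algebraMap E F d := by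
          have h := minpoly.aeval E y
          rw [hmin, map_sub, map_pow, Polynomial.aeval_X, Polynomial.aeval_C, sub_eq_zero] at h
          exact h
        have hdE : algebraMap E F d ∈ E := d.2
        interval_cases n
        · rw [pow_zero, pow_one] at hy
          rw [show y ^ 4 = (y : F) ^ 4 from rfl, hy]
          exact pow_mem hdE 4
        · rw [pow_one] at hy
          have : y ^ 4 = (algebraMap E F d) ^ 2 := by rw [← hy]; ring
          rw [this]
          exact pow_mem hdE 2
        · rw [show (2:ℕ) ^ 2 = 4 from rfl] at hy
          rw [hy]
          exact hdE
      have hxE : x ∈ E := by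
        have hz4 : z ^ 4 ∈ E := claim z
        have hx4 : x ^ 4 ∈ E := claim x
        have hz8 : z ^ 8 ∈ E := by
          have hm := E.mul_mem hz4 hz4
          rwa [show z ^ 4 * z ^ 4 = z ^ 8 by ring] at hm
        have h8 : z ^ 8 = (algebraMap K F a₀) ^ 2 + x ^ 2 +
            (algebraMap K F a₂) ^ 2 * x ^ 4 := by
          have h := congrArg (fun t => t ^ 2) hz
          rw [show (z ^ 4) ^ 2 = z ^ 8 by ring] at h
          rw [h, add_pow_char, add_pow_char]
          ring
        have hx2 : x ^ 2 ∈ E := by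
          have hxe : x ^ 2 = z ^ 8 - (algebraMap K F a₀) ^ 2 -
              (algebraMap K F a₂) ^ 2 * x ^ 4 := by
            rw [h8]; ring
          rw [hxe]
          exact E.sub_mem (E.sub_mem hz8 (pow_mem (E.algebraMap_mem a₀) 2))
            (E.mul_mem (pow_mem (E.algebraMap_mem a₂) 2) hx4)
        have hxe : x = z ^ 4 - algebraMap K F a₀ - algebraMap K F a₂ * x ^ 2 := by
          rw [hz]; ring
        rw [hxe]
        exact E.sub_mem (E.sub_mem hz4 (E.algebraMap_mem a₀))
          (E.mul_mem (E.algebraMap_mem a₂) hx2)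
      have hLle : L ≤ E := by
        rw [hL]
        apply adjoin_le_iff.mpr
        rintro y hy
        rw [Set.mem_singleton_iff] at hy
        rw [hy]
        exact hxE
      exact (eq_of_le_of_finrank_eq' hLle (by rw [hfr4, hr])).symm
    · rintro rfl
      exact ⟨hPIL, hfr4⟩
end

section
/- Let K be a field of characteristic 2, a₂ ∈ K \ K², a₀ ∈ K, and consider F₁ = K(x, z) with z² = a₀ + x + a₂ x². Then the residue field of the place of F₁|K at infinity (the pole of x) is K(a₂^{1/2}), a purely inseparable quadratic extension of K; in particular this place has degree 2 and is not rational. -/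
open IntermediateField Polynomial

section Aux

variable {K F : Type*} [Field K] [Field F] [Algebra K F]
  (O : ValuationSubring F)

private lemma aux_val_alg_le (hK : ∀ c : K, algebraMap K F c ∈ O) (c : K) : O.valuation (algebraMap K F c) ≤ 1 :=
  (O.valuation_le_one_iff _).mpr (hK c)

private lemma aux_val_alg_eq (hK : ∀ c : K, algebraMap K F c ∈ O) {c : K} (hc : c ≠ 0) : O.valuation (algebraMap K F c) = 1 := by
  refine le_antisymm (aux_val_alg_le O hK c) ?_
  have h1 : O.valuation (algebraMap K F c) * O.valuation (algebraMap K F c⁻¹) = 1 := by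
    rw [← Valuation.map_mul, ← map_mul, mul_inv_cancel₀ hc, map_one, map_one]
  calc (1 : _) = O.valuation (algebraMap K F c) * O.valuation (algebraMap K F c⁻¹) := h1.symm
    _ ≤ O.valuation (algebraMap K F c) * 1 := mul_le_mul_right (aux_val_alg_le O hK c⁻¹) _
    _ = _ := mul_one _

private lemma aux_val_aeval_le (hK : ∀ c : K, algebraMap K F c ∈ O) {x : F} (hx1 : 1 ≤ O.valuation x) (P : K[X]) :
    O.valuation (aeval x P) ≤ O.valuation x ^ P.natDegree := by
  rw [Polynomial.aeval_eq_sum_range]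
  apply Valuation.map_sum_le
  intro i hi
  rw [Algebra.smul_def, Valuation.map_mul, Valuation.map_pow]
  calc O.valuation (algebraMap K F (P.coeff i)) * O.valuation x ^ i
      ≤ 1 * O.valuation x ^ i := mul_le_mul_left (aux_val_alg_le O hK _) _
    _ = O.valuation x ^ i := one_mul _
    _ ≤ O.valuation x ^ P.natDegree :=
        pow_le_pow_right₀ hx1 (Finset.mem_range_succ_iff.mp hi)

private lemma aux_val_aeval_eq (hK : ∀ c : K, algebraMap K F c ∈ O) {x : F} (hx1 : 1 < O.valuation x)
    {P : K[X]} (hP : P ≠ 0) :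
    O.valuation (aeval x P) = O.valuation x ^ P.natDegree := by
  have he0 : O.valuation x ≠ 0 := ne_of_gt (zero_lt_one.trans hx1)
  rcases Nat.eq_zero_or_pos P.natDegree with h0 | hpos
  · obtain ⟨c, rfl⟩ := Polynomial.natDegree_eq_zero.mp h0
    have hc : c ≠ 0 := fun h => hP (by rw [h, map_zero])
    rw [aeval_C, Polynomial.natDegree_C, pow_zero]
    exact aux_val_alg_eq O hK hc
  · have key := Polynomial.eraseLead_add_C_mul_X_pow P
    have hval2 : O.valuation (algebraMap K F P.leadingCoeff * x ^ P.natDegree)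
        = O.valuation x ^ P.natDegree := by
      rw [Valuation.map_mul, Valuation.map_pow,
        aux_val_alg_eq O hK (Polynomial.leadingCoeff_ne_zero.mpr hP), one_mul]
    have hlt : O.valuation (aeval x P.eraseLead) < O.valuation x ^ P.natDegree := by
      calc O.valuation (aeval x P.eraseLead) ≤ O.valuation x ^ P.eraseLead.natDegree :=
            aux_val_aeval_le O hK hx1.le _
        _ ≤ O.valuation x ^ (P.natDegree - 1) :=
            pow_le_pow_right₀ hx1.le (Polynomial.eraseLead_natDegree_le P)
        _ < O.valuation x ^ P.natDegree :=
            pow_lt_pow_right₀ hx1 (Nat.sub_lt hpos one_pos)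
    have hsum : aeval x P
        = aeval x P.eraseLead + algebraMap K F P.leadingCoeff * x ^ P.natDegree := by
      conv_lhs => rw [← key]
      rw [map_add, map_mul, aeval_C, aeval_X_pow]
    rw [hsum, Valuation.map_add_eq_of_lt_right _ (by rw [hval2]; exact hlt), hval2]

private lemma aux_residue_rat (hK : ∀ c : K, algebraMap K F c ∈ O) {x : F} (hx1 : 1 < O.valuation x)
    {A : F} (hAx : A ∈ IntermediateField.adjoin K {x}) (hA : A ∈ O) :
    ∃ c : K, IsLocalRing.residue O ⟨A, hA⟩
      = IsLocalRing.residue O ⟨algebraMap K F c, hK c⟩ := by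
  have he0 : (0 : _) < O.valuation x := zero_lt_one.trans hx1
  suffices h : ∃ c : K, O.valuation (A - algebraMap K F c) < 1 by
    obtain ⟨c, hc⟩ := h
    have hmem : (⟨A, hA⟩ - ⟨algebraMap K F c, hK c⟩ : O) ∈ IsLocalRing.maximalIdeal O := by
      rw [ValuationSubring.valuation_lt_one_iff]
      simpa using hc
    refine ⟨c, ?_⟩
    have h0 := (IsLocalRing.residue_eq_zero_iff _).mpr hmem
    rwa [map_sub, sub_eq_zero] at h0
  obtain ⟨P, Q, hPQ⟩ := (IntermediateField.mem_adjoin_simple_iff K A).mp hAx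
  subst hPQ
  rcases eq_or_ne (aeval x Q) 0 with hQ | hQ
  · exact ⟨0, by simp [hQ, zero_lt_one]⟩
  have hQ0 : Q ≠ 0 := fun h => hQ (by simp [h])
  rcases eq_or_ne P 0 with rfl | hP0
  · exact ⟨0, by simp [zero_lt_one]⟩
  have hvQ : O.valuation (aeval x Q) = O.valuation x ^ Q.natDegree :=
    aux_val_aeval_eq O hK hx1 hQ0
  have hvP : O.valuation (aeval x P) = O.valuation x ^ P.natDegree :=
    aux_val_aeval_eq O hK hx1 hP0
  have hA1 : O.valuation (aeval x P / aeval x Q) ≤ 1 := (O.valuation_le_one_iff _).mpr hA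
  have hpn : (0:_) < O.valuation x ^ Q.natDegree := pow_pos he0 _
  have hle : O.valuation x ^ P.natDegree ≤ O.valuation x ^ Q.natDegree := by
    rw [map_div₀, hvP, hvQ, div_le_one₀ hpn] at hA1
    exact hA1
  have hdeg : P.natDegree ≤ Q.natDegree := by
    by_contra h
    exact absurd hle (not_le.mpr (pow_lt_pow_right₀ hx1 (not_le.mp h)))
  set c := P.coeff Q.natDegree / Q.leadingCoeff with hc
  set R := P - C c * Q with hR
  have hlc : Q.leadingCoeff ≠ 0 := Polynomial.leadingCoeff_ne_zero.mpr hQ0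
  have hRn : R.coeff Q.natDegree = 0 := by
    rw [hR, Polynomial.coeff_sub, Polynomial.coeff_C_mul, Polynomial.coeff_natDegree,
      hc, div_mul_cancel₀ _ hlc, sub_self]
  have hvR : O.valuation (aeval x R) < O.valuation x ^ Q.natDegree := by
    rcases eq_or_ne R 0 with h | h
    · rw [h, map_zero, Valuation.map_zero]
      exact hpn
    · have hRdeg : R.natDegree < Q.natDegree := by
        have h1 : R.natDegree ≤ Q.natDegree := by
          refine le_trans (Polynomial.natDegree_sub_le _ _) (max_le hdeg ?_)
          exact le_trans (Polynomial.natDegree_C_mul_le _ _) le_rfl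
        rcases lt_or_eq_of_le h1 with h2 | h2
        · exact h2
        · exfalso
          apply h
          apply Polynomial.leadingCoeff_eq_zero.mp
          rw [← Polynomial.coeff_natDegree, h2]
          exact hRn
      calc O.valuation (aeval x R) ≤ O.valuation x ^ R.natDegree :=
            aux_val_aeval_le O hK hx1.le _
        _ < O.valuation x ^ Q.natDegree := pow_lt_pow_right₀ hx1 hRdeg
  refine ⟨c, ?_⟩
  have key : aeval x P / aeval x Q - algebraMap K F c = aeval x R / aeval x Q := by
    rw [hR, map_sub, map_mul, aeval_C]
    field_simp
  rw [key, map_div₀, hvQ, div_lt_iff₀ hpn, one_mul]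
  exact hvR

end Aux

/-- Let `K` be of characteristic 2, `a₂ ∈ K \ K²`, `a₀ ∈ K`, and
`F₁ = K(x, z)` with `z² = a₀ + x + a₂x²`. Then the residue field of the place of `F₁|K`
at infinity (any valuation subring `O` containing the constants with `x ∉ O`, i.e. a pole
of `x`) is `K(a₂^{1/2})`: it contains an element `t` with `t² = a₂` which is not in (the
image of) `K`, and every element is a `K`-linear combination of `1` and `t`; in particular
the place has degree 2 over `K` and is not rational. -/
theorem stmt_9 {K F₁ : Type*} [Field K] [Field F₁] [CharP K 2] [Algebra K F₁]
    (a₀ a₂ : K) (h2 : ∀ t : K, t ^ 2 ≠ a₂)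
    (x z : F₁) (hx : Transcendental K x)
    (hz : z ^ 2 = algebraMap K F₁ a₀ + x + algebraMap K F₁ a₂ * x ^ 2)
    (hgen : adjoin K {x, z} = ⊤)
    (O : ValuationSubring F₁) (hK : ∀ c : K, algebraMap K F₁ c ∈ O) (hxO : x ∉ O) :
    ∃ t : IsLocalRing.ResidueField O,
      t ^ 2 = IsLocalRing.residue O ⟨algebraMap K F₁ a₂, hK a₂⟩ ∧
      t ∉ Set.range (fun c : K => IsLocalRing.residue O ⟨algebraMap K F₁ c, hK c⟩) ∧
      ∀ u : IsLocalRing.ResidueField O, ∃ c₀ c₁ : K,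
        u = IsLocalRing.residue O ⟨algebraMap K F₁ c₀, hK c₀⟩
          + IsLocalRing.residue O ⟨algebraMap K F₁ c₁, hK c₁⟩ * t := by
  classical
  set v := O.valuation with hv
  -- basic valuation facts
  have he : 1 < v x := by
    by_contra h
    exact hxO ((O.valuation_le_one_iff x).mp (not_lt.mp h))
  have he0 : (0:_) < v x := zero_lt_one.trans he
  have hxne : x ≠ 0 := by
    intro h
    rw [h, Valuation.map_zero] at he
    exact absurd he (not_lt.mpr zero_le')
  have hK2 : (2 : K) = 0 := by exact_mod_cast CharP.cast_eq_zero K 2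
  have h2F : (2 : F₁) = 0 := by
    rw [← map_ofNat (algebraMap K F₁) 2, hK2, map_zero]
  have ha₂ : a₂ ≠ 0 := fun h => h2 0 (by rw [h]; ring)
  -- the element w = z / x
  set w := z / x with hwdef
  have hw2 : w ^ 2 = algebraMap K F₁ a₂ + (x⁻¹ + algebraMap K F₁ a₀ * x⁻¹ ^ 2) := by
    rw [hwdef, div_pow, hz]
    field_simp
    ring
  have hvinv : v x⁻¹ < 1 := by
    rw [map_inv₀]
    exact inv_lt_one_of_one_lt₀ he
  have hvsmall : v (x⁻¹ + algebraMap K F₁ a₀ * x⁻¹ ^ 2) < 1 := by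
    refine lt_of_le_of_lt (v.map_add _ _) (max_lt hvinv ?_)
    calc v (algebraMap K F₁ a₀ * x⁻¹ ^ 2) = v (algebraMap K F₁ a₀) * (v x⁻¹ * v x⁻¹) := by
          rw [Valuation.map_mul, Valuation.map_pow, sq]
      _ ≤ 1 * (v x⁻¹ * v x⁻¹) := mul_le_mul_left (aux_val_alg_le O hK a₀) _
      _ = v x⁻¹ * v x⁻¹ := one_mul _
      _ ≤ 1 * v x⁻¹ := mul_le_mul_left hvinv.le _
      _ = v x⁻¹ := one_mul _
      _ < 1 := hvinv
  have hva₂ : v (algebraMap K F₁ a₂) = 1 := aux_val_alg_eq O hK ha₂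
  have hvw2 : v (w ^ 2) = 1 := by
    rw [hw2, Valuation.map_add_eq_of_lt_left _ (by rw [hva₂]; exact hvsmall), hva₂]
  have hvw : v w = 1 := by
    have hsq : v w * v w = 1 := by
      rw [← Valuation.map_mul, ← sq, hvw2]
    rcases lt_trichotomy (v w) 1 with h | h | h
    · exfalso
      have : v w * v w < 1 := by
        calc v w * v w ≤ 1 * v w := mul_le_mul_left h.le _
          _ = v w := one_mul _
          _ < 1 := h
      rw [hsq] at this; exact lt_irrefl _ this
    · exact h
    · exfalso
      have : 1 < v w * v w := by
        calc 1 < v w := h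
          _ = v w * 1 := (mul_one _).symm
          _ ≤ v w * v w := mul_le_mul_right h.le _
      rw [hsq] at this; exact lt_irrefl _ this
  have hwO : w ∈ O := (O.valuation_le_one_iff w).mp hvw.le
  set t := IsLocalRing.residue O ⟨w, hwO⟩ with ht
  -- Part 1 : t ^ 2 = residue a₂
  have hpart1 : t ^ 2 = IsLocalRing.residue O ⟨algebraMap K F₁ a₂, hK a₂⟩ := by
    have hmem : ((⟨w, hwO⟩ : O) ^ 2 - ⟨algebraMap K F₁ a₂, hK a₂⟩) ∈
        IsLocalRing.maximalIdeal O := by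
      rw [ValuationSubring.valuation_lt_one_iff]
      have : ((((⟨w, hwO⟩ : O) ^ 2 - ⟨algebraMap K F₁ a₂, hK a₂⟩) : O) : F₁)
          = x⁻¹ + algebraMap K F₁ a₀ * x⁻¹ ^ 2 := by
        push_cast
        rw [hw2]; ring
      rw [this]
      exact hvsmall
    have h0 := (IsLocalRing.residue_eq_zero_iff _).mpr hmem
    rw [map_sub, map_pow, sub_eq_zero] at h0
    exact h0
  -- Part 2
  have hpart2 : t ∉ Set.range
      (fun c : K => IsLocalRing.residue O ⟨algebraMap K F₁ c, hK c⟩) := by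
    rintro ⟨c, hc⟩
    -- residue (alg c) = t, so w - alg c ∈ m
    have hmem : ((⟨w, hwO⟩ : O) - ⟨algebraMap K F₁ c, hK c⟩) ∈ IsLocalRing.maximalIdeal O := by
      rw [← IsLocalRing.residue_eq_zero_iff, map_sub, sub_eq_zero]
      exact hc.symm
    rw [ValuationSubring.valuation_lt_one_iff] at hmem
    have hdifflt : v (w - algebraMap K F₁ c) < 1 := by simpa using hmem
    have hsqlt : v ((w - algebraMap K F₁ c) ^ 2) < 1 := by
      rw [Valuation.map_pow, sq]
      calc v (w - algebraMap K F₁ c) * v (w - algebraMap K F₁ c)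
          ≤ 1 * v (w - algebraMap K F₁ c) := mul_le_mul_left hdifflt.le _
        _ = v (w - algebraMap K F₁ c) := one_mul _
        _ < 1 := hdifflt
    have hchar : (w - algebraMap K F₁ c) ^ 2 = w ^ 2 - algebraMap K F₁ c ^ 2 := by
      have h22 : (2 : F₁) = 0 := h2F
      ring_nf
      linear_combination (algebraMap K F₁ c ^ 2 - w * algebraMap K F₁ c) * h22
    have hkey : algebraMap K F₁ (a₂ - c ^ 2)
        = (algebraMap K F₁ a₂ - w ^ 2) + (w - algebraMap K F₁ c) ^ 2 := by
      rw [hchar, map_sub, map_pow]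
      ring
    have hv1 : v (algebraMap K F₁ (a₂ - c ^ 2)) = 1 :=
      aux_val_alg_eq O hK (sub_ne_zero.mpr fun h => h2 c h.symm)
    have hv2 : v (algebraMap K F₁ a₂ - w ^ 2) < 1 := by
      have : algebraMap K F₁ a₂ - w ^ 2 = -(x⁻¹ + algebraMap K F₁ a₀ * x⁻¹ ^ 2) := by
        rw [hw2]; ring
      rw [this, Valuation.map_neg]
      exact hvsmall
    have : v (algebraMap K F₁ (a₂ - c ^ 2)) < 1 := by
      rw [hkey]
      exact lt_of_le_of_lt (v.map_add _ _) (max_lt hv2 hsqlt)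
    rw [hv1] at this
    exact lt_irrefl _ this
  -- Part 3
  -- The subfield K(x) + K(x)·z is all of F₁
  have hKx := IntermediateField.adjoin K ({x} : Set F₁)
  set Kx := IntermediateField.adjoin K ({x} : Set F₁) with hKxdef
  have hxKx : x ∈ Kx := IntermediateField.mem_adjoin_simple_self K x
  have hz2Kx : z ^ 2 ∈ Kx := by
    rw [hz]
    exact add_mem (add_mem (IntermediateField.algebraMap_mem Kx a₀) hxKx)
      (mul_mem (IntermediateField.algebraMap_mem Kx a₂) (pow_mem hxKx 2))
  have hrep : ∀ y : F₁, ∃ A ∈ Kx, ∃ B ∈ Kx, y = A + B * z := by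
    have hsub : ∀ S : Subalgebra K F₁, True := fun _ => trivial
    set Scar : Set F₁ := {y | ∃ A ∈ Kx, ∃ B ∈ Kx, y = A + B * z} with hScar
    have hone : (1 : F₁) ∈ Scar := ⟨1, one_mem _, 0, zero_mem _, by ring⟩
    have hmul : ∀ a ∈ Scar, ∀ b ∈ Scar, a * b ∈ Scar := by
      rintro a ⟨A, hA, B, hB, rfl⟩ b ⟨C, hC, D, hD, rfl⟩
      refine ⟨A * C + B * D * z ^ 2, ?_, A * D + B * C, ?_, by ring⟩
      · exact add_mem (mul_mem hA hC) (mul_mem (mul_mem hB hD) hz2Kx)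
      · exact add_mem (mul_mem hA hD) (mul_mem hB hC)
    have hadd : ∀ a ∈ Scar, ∀ b ∈ Scar, a + b ∈ Scar := by
      rintro a ⟨A, hA, B, hB, rfl⟩ b ⟨C, hC, D, hD, rfl⟩
      exact ⟨A + C, add_mem hA hC, B + D, add_mem hB hD, by ring⟩
    have halg : ∀ c : K, algebraMap K F₁ c ∈ Scar :=
      fun c => ⟨algebraMap K F₁ c, IntermediateField.algebraMap_mem Kx c, 0, zero_mem _, by ring⟩
    have hzero : (0 : F₁) ∈ Scar := ⟨0, zero_mem _, 0, zero_mem _, by ring⟩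
    have hinv : ∀ a ∈ Scar, a⁻¹ ∈ Scar := by
      rintro a ⟨A, hA, B, hB, rfl⟩
      set d := A ^ 2 + B ^ 2 * z ^ 2 with hd
      have hdKx : d ∈ Kx := add_mem (pow_mem hA 2) (mul_mem (pow_mem hB 2) hz2Kx)
      have hdeq : d = (A + B * z) ^ 2 := by
        have h22 : (2 : F₁) = 0 := h2F
        ring_nf
        linear_combination (-(A * B * z) - A*B*z*0) * h22
      have hform : (A + B * z)⁻¹ = A * d⁻¹ + B * d⁻¹ * z := by
        rcases eq_or_ne (A + B * z) 0 with h | h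
        · rw [h, hdeq, h]
          simp
        · have hd0 : d ≠ 0 := by rw [hdeq]; exact pow_ne_zero _ h
          rw [hdeq]
          field_simp
      exact ⟨A * d⁻¹, mul_mem hA (inv_mem hdKx), B * d⁻¹, mul_mem hB (inv_mem hdKx), hform⟩
    -- build the intermediate field
    set Ssub : Subalgebra K F₁ :=
      { carrier := Scar
        mul_mem' := fun ha hb => hmul _ ha _ hb
        one_mem' := hone
        add_mem' := fun ha hb => hadd _ ha _ hb
        zero_mem' := hzero
        algebraMap_mem' := halg } with hSsub
    set S : IntermediateField K F₁ := Ssub.toIntermediateField (fun y hy => hinv y hy) with hS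
    have hxS : x ∈ S := ⟨x, hxKx, 0, zero_mem _, by ring⟩
    have hzS : z ∈ S := ⟨0, zero_mem _, 1, one_mem _, by ring⟩
    have hle : IntermediateField.adjoin K ({x, z} : Set F₁) ≤ S := by
      rw [IntermediateField.adjoin_le_iff]
      rintro y (rfl | rfl)
      · exact hxS
      · exact hzS
    intro y
    have : y ∈ S := hle (by rw [hgen]; trivial)
    exact this
  refine ⟨t, hpart1, hpart2, ?_⟩
  intro u
  obtain ⟨yO, hyO⟩ := IsLocalRing.residue_surjective (R := O) u
  obtain ⟨A, hA, B, hB, hy⟩ := hrep (yO : F₁)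
  set B' := B * x with hB'
  have hB'Kx : B' ∈ Kx := mul_mem hB hxKx
  have hyw : (yO : F₁) = A + B' * w := by
    rw [hy, hB', hwdef]
    field_simp
  have hvy : v ((yO : F₁)) ≤ 1 := (O.valuation_le_one_iff _).mpr yO.2
  -- both A and B' are in O
  have hmain : v A ≤ 1 ∧ v B' ≤ 1 := by
    by_contra hcon
    rw [not_and_or, not_le, not_le] at hcon
    have hvBw : v (B' * w) = v B' := by
      rw [Valuation.map_mul, hvw, mul_one]
    have heqv : v A = v B' := by
      by_contra hne
      have : v (yO : F₁) = max (v A) (v (B' * w)) := by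
        rw [hyw]
        exact Valuation.map_add_of_distinct_val _ (by rw [hvBw]; exact hne)
      rw [hvBw] at this
      rcases hcon with h | h
      · exact absurd (le_trans (le_max_left (v A) (v B')) (this ▸ hvy)) (not_le.mpr h)
      · exact absurd (le_trans (le_max_right (v A) (v B')) (this ▸ hvy)) (not_le.mpr h)
    have h1B : 1 < v B' := by
      rcases hcon with h | h
      · rw [heqv] at h; exact h
      · exact h
    have hB'ne : B' ≠ 0 := by
      intro h
      rw [h, Valuation.map_zero] at h1B
      exact absurd h1B (not_lt.mpr zero_le')
    have hAne : A ≠ 0 := by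
      intro h
      rw [h, Valuation.map_zero] at heqv
      rw [← heqv] at h1B
      exact absurd h1B (not_lt.mpr zero_le')
    set q := A / B' with hq
    have hqKx : q ∈ Kx := div_mem hA hB'Kx
    have hvq : v q = 1 := by
      rw [hq, map_div₀, heqv, div_self]
      intro h
      rw [h] at h1B
      exact absurd h1B (not_lt.mpr zero_le')
    have hqO : q ∈ O := (O.valuation_le_one_iff q).mp hvq.le
    have hfrac : (yO : F₁) / B' = q + w := by
      rw [hyw, hq]
      field_simp
    have hvfrac : v ((yO : F₁) / B') < 1 := by
      rw [map_div₀]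
      rw [div_lt_iff₀ (zero_lt_one.trans h1B), one_mul]
      exact lt_of_le_of_lt hvy h1B
    have hqw : v (q + w) < 1 := hfrac ▸ hvfrac
    -- so residue q = -t = residue of some alg c, contradicting hpart2
    have hmem : ((⟨q, hqO⟩ : O) + ⟨w, hwO⟩) ∈ IsLocalRing.maximalIdeal O := by
      rw [ValuationSubring.valuation_lt_one_iff]
      simpa using hqw
    have h0 := (IsLocalRing.residue_eq_zero_iff _).mpr hmem
    rw [map_add] at h0
    have hres : t = - IsLocalRing.residue O ⟨q, hqO⟩ := by
      rw [ht, eq_neg_iff_add_eq_zero, add_comm]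
      exact h0
    obtain ⟨c, hcq⟩ := aux_residue_rat O hK he hqKx hqO
    apply hpart2
    refine ⟨-c, ?_⟩
    show IsLocalRing.residue O ⟨algebraMap K F₁ (-c), hK (-c)⟩ = t
    have hneg : (⟨algebraMap K F₁ (-c), hK (-c)⟩ : O) = -(⟨algebraMap K F₁ c, hK c⟩ : O) := by
      ext; simp
    rw [hneg, map_neg, ← hcq]
    exact hres.symm
  have hAO : A ∈ O := (O.valuation_le_one_iff A).mp hmain.1
  have hB'O : B' ∈ O := (O.valuation_le_one_iff B').mp hmain.2
  obtain ⟨c₀, hc₀⟩ := aux_residue_rat O hK he hA hAO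
  obtain ⟨c₁, hc₁⟩ := aux_residue_rat O hK he hB'Kx hB'O
  refine ⟨c₀, c₁, ?_⟩
  have hyO' : yO = (⟨A, hAO⟩ : O) + ⟨B', hB'O⟩ * ⟨w, hwO⟩ := by
    ext
    push_cast
    exact hyw
  rw [← hyO, hyO', map_add, map_mul, hc₀, hc₁, ht]
end

section
/- Let k be an algebraically closed field of characteristic 2. The surface S ⊂ ℙ² × ℙ¹ defined by the bihomogeneous equation T₀(Y⁴ + XZ³) + T₁X⁴ = 0 has exactly one singular point, namely P = ((0:0:1),(0:1)); at every other point of S at least one of the partial derivatives of the defining bihomogeneous polynomial with respect to X, Y, Z, T₀, T₁ is nonzero. -/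
open MvPolynomial

/-- The bihomogeneous polynomial `T₀(Y⁴ + XZ³) + T₁X⁴` in the variables
`X 0 = X, X 1 = Y, X 2 = Z, X 3 = T₀, X 4 = T₁`. -/
noncomputable def surfacePoly (k : Type*) [CommRing k] : MvPolynomial (Fin 5) k :=
  X 3 * ((X 1) ^ 4 + X 0 * (X 2) ^ 3) + X 4 * (X 0) ^ 4

/-- Over an algebraically closed field `k` of characteristic 2, the surface
`S ⊂ ℙ² × ℙ¹` defined by `T₀(Y⁴ + XZ³) + T₁X⁴ = 0` has exactly one singular point,
`P = ((0:0:1),(0:1))`: at a point of `S` all five partial derivatives of the defining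
bihomogeneous polynomial vanish iff `x = 0`, `y = 0` and `t₀ = 0` (which, with the
nonvanishing conditions, is exactly the point `((0:0:1),(0:1))`). -/
theorem stmt_14 {k : Type*} [Field k] [IsAlgClosed k] [CharP k 2] :
    ∀ x y z t₀ t₁ : k, ¬ (x = 0 ∧ y = 0 ∧ z = 0) → ¬ (t₀ = 0 ∧ t₁ = 0) →
      eval ![x, y, z, t₀, t₁] (surfacePoly k) = 0 →
      ((∀ i : Fin 5, eval ![x, y, z, t₀, t₁] (pderiv i (surfacePoly k)) = 0) ↔
        (x = 0 ∧ y = 0 ∧ t₀ = 0)) := by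
  intro x y z t₀ t₁ hxyz ht hF
  have h2 : (2 : k) = 0 := by exact_mod_cast CharP.cast_eq_zero k 2
  have h4 : (4 : k) = 0 := by
    have : (4 : k) = 2 * 2 := by norm_num
    rw [this, h2]; ring
  have h3 : (3 : k) = 1 := by
    have : (3 : k) = 2 + 1 := by norm_num
    rw [this, h2]; ring
  have e0 : eval ![x, y, z, t₀, t₁] (pderiv 0 (surfacePoly k)) = t₀ * z ^ 3 := by
    simp [surfacePoly, pderiv_X, h4]
    try ring
  have e1 : eval ![x, y, z, t₀, t₁] (pderiv 1 (surfacePoly k)) = 0 := by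
    simp [surfacePoly, pderiv_X, h4]
  have e2 : eval ![x, y, z, t₀, t₁] (pderiv 2 (surfacePoly k)) = t₀ * x * z ^ 2 := by
    simp [surfacePoly, pderiv_X, h3]
    try ring
  have e3 : eval ![x, y, z, t₀, t₁] (pderiv 3 (surfacePoly k)) = y ^ 4 + x * z ^ 3 := by
    simp [surfacePoly, pderiv_X]
  have e4 : eval ![x, y, z, t₀, t₁] (pderiv 4 (surfacePoly k)) = x ^ 4 := by
    simp [surfacePoly, pderiv_X]
  constructor
  · intro h
    have hx : x = 0 := by have := h 4; rw [e4] at this; exact pow_eq_zero_iff (n := 4) (by norm_num) |>.mp this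
    have hy : y = 0 := by
      have := h 3; rw [e3, hx] at this; simpa using pow_eq_zero_iff (n := 4) (by norm_num) |>.mp (by simpa using this)
    have hz : z ≠ 0 := fun hz => hxyz ⟨hx, hy, hz⟩
    have := h 0; rw [e0] at this
    have ht₀ : t₀ = 0 := by
      rcases mul_eq_zero.mp this with h' | h'
      · exact h'
      · exact absurd (pow_eq_zero_iff (n := 3) (by norm_num) |>.mp h') hz
    exact ⟨hx, hy, ht₀⟩
  · rintro ⟨hx, hy, ht₀⟩ i
    subst hx; subst hy; subst ht₀
    fin_cases i <;> simp [surfacePoly, pderiv_X]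
end
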